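/- Assume additionally that λ₊ and λ₋ are distinct and are the only nonzero eigenvalues of F̃₃*. Then: (a) there is no C ∈ [0,1] such that C·|v₊(e)|² + (1−C)·|v₋(e)|² = 1/3 holds simultaneously for e = 0, 1, 2; (b) consequently, the natural measure μ_nat — the product probability measure on Σ giving each coordinate the uniform distribution (1/3,1/3,1/3) on {0,1,2} — is not the weak-* limit of any sequence (μ_{η_p})_{p≥1} of measures from the family {μ_η : n ≥ 1, η : ℤ/nℤ → {+,−}}. -/

import Mathlib

open MeasureTheory
open scoped ENNReal

/-- The two-sided shift on `Σ = {0,1,2}^ℤ`. -/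
def shiftMap (ε : ℤ → Fin 3) : ℤ → Fin 3 := fun n => ε (n + 1)

/-- `μ` is the product measure on `{0,1,2}^ℤ` with one-site weights `P n` at coordinate `n`. -/
def IsProductMeasure (μ : Measure (ℤ → Fin 3)) (P : ℤ → Fin 3 → ℝ) : Prop :=
  ∀ (s : Finset ℤ) (g : ℤ → Fin 3),
    μ {ε | ∀ i ∈ s, ε i = g i} = ∏ i ∈ s, ENNReal.ofReal (P i (g i))

/-- The 3×3 discrete Fourier transform. -/
noncomputable def dft3 : Matrix (Fin 3) (Fin 3) ℂ := fun j k =>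
  (((Real.sqrt 3)⁻¹ : ℝ) : ℂ) *
    Complex.exp (-2 * Real.pi * Complex.I * ((j : ℕ) : ℂ) * ((k : ℕ) : ℂ) / 3)

/-- The orthogonal projection of `ℂ³` onto `span(e₀,e₂)`. -/
def pi02 : Matrix (Fin 3) (Fin 3) ℂ := fun i j => if i = j ∧ i ≠ 1 then 1 else 0

/-- The matrix `F̃₃* = F₃* ∘ π₀₂`. -/
noncomputable def F3tilde : Matrix (Fin 3) (Fin 3) ℂ := dft3.conjTranspose * pi02

/-- The weight `P(e) = |v(e)|²`. -/
noncomputable def Pweight (v : Fin 3 → ℂ) (e : Fin 3) : ℝ := ‖v e‖ ^ 2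

/-- The weight `P*(e) = |(F₃v)(e)|²`. -/
noncomputable def PstarWeight (v : Fin 3 → ℂ) (e : Fin 3) : ℝ :=
  ‖dft3.mulVec v e‖ ^ 2

/-- The fraction `t(η)` of symbols `+` in `η`. -/
noncomputable def tplus (n : ℕ) (hn : 0 < n) (η : ZMod n → Bool) : ℝ :=
  haveI : NeZero n := ⟨hn.ne'⟩
  ((Finset.univ.filter fun j => η j = true).card : ℝ) / n

/-- The decay rate `Λ_η = |λ₋|^{2(1-t(η))}·|λ₊|^{2t(η)}`. -/
noncomputable def LamEta (lp lm : ℂ) (n : ℕ) (hn : 0 < n) (η : ZMod n → Bool) : ℝ :=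
  ‖lm‖ ^ (2 * (1 - tplus n hn η)) * ‖lp‖ ^ (2 * tplus n hn η)

/-- The coefficient `C_{η,j} = Π_{m<j} (|λ_{η(m)}|²/Λ_η)`. -/
noncomputable def Cweight (lp lm : ℂ) (n : ℕ) (hn : 0 < n) (η : ZMod n → Bool)
    (j : ZMod n) : ℝ :=
  haveI : NeZero n := ⟨hn.ne'⟩
  ∏ m ∈ Finset.range j.val,
    (‖(if η (m : ZMod n) then lp else lm)‖ ^ 2 / LamEta lp lm n hn η)

/-- The family `μ̃_{η,j}`: each `μt j` is the product probability measure whose factor at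
coordinate `m ∈ ℤ` is `P_{η(j+m)}` if `m ≥ 0` and `P*_{η(j+m)}` if `m < 0`. -/
def IsTildeFamily (vp vm : Fin 3 → ℂ) (n : ℕ) (hn : 0 < n) (η : ZMod n → Bool)
    (μt : ZMod n → Measure (ℤ → Fin 3)) : Prop :=
  ∀ j : ZMod n, IsProbabilityMeasure (μt j) ∧
    IsProductMeasure (μt j) (fun m e =>
      if 0 ≤ m then Pweight (if η (j + (m : ZMod n)) then vp else vm) e
      else PstarWeight (if η (j + (m : ZMod n)) then vp else vm) e)

/-- The eigenmeasure `μ_η = 𝒩_η⁻¹ Σ_j C_{η,j} μ̃_{η,j}`. -/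
noncomputable def muEta (lp lm : ℂ) (n : ℕ) (hn : 0 < n) (η : ZMod n → Bool)
    (μt : ZMod n → Measure (ℤ → Fin 3)) : Measure (ℤ → Fin 3) :=
  haveI : NeZero n := ⟨hn.ne'⟩
  (ENNReal.ofReal (∑ j : ZMod n, Cweight lp lm n hn η j))⁻¹ •
    ∑ j : ZMod n, ENNReal.ofReal (Cweight lp lm n hn η j) • μt j

open MeasureTheory Complex
open scoped ENNReal Real

noncomputable def omg : ℂ := Complex.exp ((2 * Real.pi / 3 : ℝ) * Complex.I)

lemma omg_im : omg.im = Real.sin (2 * Real.pi / 3) := Complex.exp_ofReal_mul_I_im _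

lemma omg_im_pos : 0 < omg.im := by
  rw [omg_im]
  apply Real.sin_pos_of_pos_of_lt_pi
  · positivity
  · nlinarith [Real.pi_pos]

lemma omg_pow_three : omg ^ 3 = 1 := by
  rw [omg, ← Complex.exp_nat_mul]
  rw [show ((3:ℕ):ℂ) * (((2 * Real.pi / 3 : ℝ) : ℂ) * Complex.I) = 2 * Real.pi * Complex.I by
    push_cast; ring]
  exact Complex.exp_two_pi_mul_I

lemma omg_ne_one : omg ≠ 1 := by
  intro h
  have := omg_im_pos
  rw [h] at this
  simp at this

lemma omg_sum : 1 + omg + omg ^ 2 = 0 := by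
  have h : (omg - 1) * (1 + omg + omg ^ 2) = 0 := by linear_combination omg_pow_three
  rcases mul_eq_zero.mp h with h1 | h2
  · exact absurd (sub_eq_zero.mp h1) omg_ne_one
  · exact h2
lemma F3tilde_mulVec (v : Fin 3 → ℂ) (j : Fin 3) :
    F3tilde.mulVec v j =
      ((Real.sqrt 3 : ℝ) : ℂ)⁻¹ *
        (v 0 + Complex.exp (2 * Real.pi * Complex.I * ((j:ℕ):ℂ) * 2 / 3) * v 2) := by
  simp only [F3tilde, ← Matrix.mulVec_mulVec]
  have hpi : pi02.mulVec v = fun i => if i ≠ 1 then v i else 0 := by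
    funext i
    simp [Matrix.mulVec, dotProduct, pi02, Fin.sum_univ_three]
    fin_cases i <;> simp
  rw [hpi]
  simp [Matrix.mulVec, dotProduct, Matrix.conjTranspose_apply, dft3,
    Fin.sum_univ_three, map_mul, Complex.conj_ofReal, ← Complex.exp_conj, map_div₀,
    Complex.conj_I]
  rw [show ((starRingEnd ℂ) 2 * ↑Real.pi * Complex.I * 2 * ((j:ℕ):ℂ) / (starRingEnd ℂ) 3)
      = 2 * Real.pi * Complex.I * ((j:ℕ):ℂ) * 2 / 3 by
    simp [map_ofNat]; ring]
  ring
lemma sqrt3_ne : ((Real.sqrt 3 : ℝ) : ℂ) ≠ 0 := by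
  simp only [ne_eq, Complex.ofReal_eq_zero]
  positivity

lemma sqrt3_sq : ((Real.sqrt 3 : ℝ) : ℂ) * ((Real.sqrt 3 : ℝ) : ℂ) = 3 := by
  rw [← Complex.ofReal_mul, Real.mul_self_sqrt (by norm_num)]
  norm_num

lemma eigen_eqs (l : ℂ) (v : Fin 3 → ℂ) (hv : F3tilde.mulVec v = l • v) :
    v 0 + v 2 = ((Real.sqrt 3 : ℝ) : ℂ) * l * v 0 ∧
    v 0 + omg ^ 2 * v 2 = ((Real.sqrt 3 : ℝ) : ℂ) * l * v 1 ∧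
    v 0 + omg * v 2 = ((Real.sqrt 3 : ℝ) : ℂ) * l * v 2 := by
  have e1 : Complex.exp (2 * (Real.pi:ℂ) * Complex.I * 2 / 3) = omg ^ 2 := by
    rw [omg, ← Complex.exp_nat_mul]; congr 1; push_cast; ring
  have e2 : Complex.exp (2 * (Real.pi:ℂ) * Complex.I * (2:ℂ) * 2 / 3) = omg ^ 4 := by
    rw [omg, ← Complex.exp_nat_mul]; congr 1; push_cast; ring
  have h4 : omg ^ 4 = omg := by
    rw [show omg ^ 4 = omg ^ 3 * omg by ring, omg_pow_three, one_mul]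
  have hj : ∀ j : Fin 3,
      ((Real.sqrt 3 : ℝ) : ℂ)⁻¹ *
        (v 0 + Complex.exp (2 * Real.pi * Complex.I * ((j:ℕ):ℂ) * 2 / 3) * v 2) = l * v j := by
    intro j
    rw [← F3tilde_mulVec, hv]
    simp
  have h0 := hj 0
  have h1 := hj 1
  have h2 := hj 2
  norm_num at h0 h1 h2
  rw [e1] at h1
  rw [e2, h4] at h2
  field_simp [sqrt3_ne] at h0 h1 h2
  exact ⟨by linear_combination h0, by linear_combination h1, by linear_combination h2⟩
lemma conj_omg : (starRingEnd ℂ) omg = omg ^ 2 := by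
  have homg_ne : omg ≠ 0 := Complex.exp_ne_zero _
  have h1 : (starRingEnd ℂ) omg * omg = 1 := by
    rw [mul_comm, Complex.mul_conj]
    rw [Complex.normSq_eq_norm_sq, omg, Complex.norm_exp_ofReal_mul_I]
    norm_num
  have h2 : ((starRingEnd ℂ) omg - omg ^ 2) * omg = 0 := by
    linear_combination h1 - omg_pow_three
  rcases mul_eq_zero.mp h2 with h | h
  · exact sub_eq_zero.mp h
  · exact absurd h homg_ne

lemma eigen_facts (l : ℂ) (hl : l ≠ 0) (v : Fin 3 → ℂ)
    (hv : F3tilde.mulVec v = l • v) (hvu : ∑ e, ‖v e‖ ^ 2 = 1) :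
    v 0 ≠ 0 ∧
    (((Real.sqrt 3 : ℝ) : ℂ) * l - 1) ^ 2
        = 1 + (omg - 1) * (((Real.sqrt 3 : ℝ) : ℂ) * l - 1) ∧
    ((‖l‖ ^ 2 : ℝ) : ℂ) *
        (∑ e : Fin 3, omg ^ (e : ℕ) * ((‖v e‖ ^ 2 : ℝ) : ℂ))
      = (((Real.sqrt 3 : ℝ) : ℂ) * l - 1) * ((‖v 0‖ ^ 2 : ℝ) : ℂ) := by
  obtain ⟨h0, h1, h2⟩ := eigen_eqs l v hv
  set s : ℂ := ((Real.sqrt 3 : ℝ) : ℂ) with hs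
  set z : ℂ := s * l - 1 with hzdef
  set zc : ℂ := s * (starRingEnd ℂ) l - 1 with hzcdef
  -- v 0 ≠ 0
  have hv0 : v 0 ≠ 0 := by
    intro h
    have hv2 : v 2 = 0 := by
      have h0' := h0; rw [h] at h0'; simpa using h0'
    have hv1 : v 1 = 0 := by
      have h1' := h1; rw [h, hv2] at h1'
      simp only [mul_zero, add_zero, zero_add] at h1'
      have := h1'.symm
      rcases mul_eq_zero.mp this with hc | hc
      · exact absurd hc (mul_ne_zero sqrt3_ne hl)
      · exact hc
    rw [Fin.sum_univ_three, h, hv1, hv2] at hvu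
    simp at hvu
  -- quadratic relation
  have hquad : z ^ 2 = 1 + (omg - 1) * z := by
    have hq : (z ^ 2 - 1 - (omg - 1) * z) * v 0 = 0 := by
      rw [hzdef]
      linear_combination (omg - s * l) * h0 - h2
    rcases mul_eq_zero.mp hq with hq' | hq'
    · linear_combination hq'
    · exact absurd hq' hv0
  refine ⟨hv0, hquad, ?_⟩
  -- notation for conjugates
  have hzc_conj : (starRingEnd ℂ) z = zc := by
    rw [hzdef, hzcdef, map_sub, map_mul, map_one, hs, Complex.conj_ofReal]
  have hquadc : zc ^ 2 = 1 + (omg ^ 2 - 1) * zc := by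
    have := congrArg (starRingEnd ℂ) hquad
    simpa [map_pow, map_sub, map_mul, map_add, map_one, hzc_conj, conj_omg] using this
  -- v 2 = z * v 0 and conjugate
  have hz2 : v 2 = z * v 0 := by rw [hzdef]; linear_combination h0
  have hc2 : (starRingEnd ℂ) (v 2) = zc * (starRingEnd ℂ) (v 0) := by
    have := congrArg (starRingEnd ℂ) hz2
    rwa [map_mul, hzc_conj] at this
  -- conjugate of h1
  have h1c : (starRingEnd ℂ) (v 0) + omg * (starRingEnd ℂ) (v 2)
      = s * (starRingEnd ℂ) l * (starRingEnd ℂ) (v 1) := by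
    have := congrArg (starRingEnd ℂ) h1
    rw [map_add, map_mul, map_mul, map_mul, map_pow, conj_omg, hs, Complex.conj_ofReal]
      at this
    rw [show (omg ^ 2) ^ 2 = omg ^ 3 * omg by ring, omg_pow_three, one_mul] at this
    exact this
  have hss : s * s = 3 := sqrt3_sq
  -- product identity for v 1
  have hP1 : 3 * (l * (starRingEnd ℂ) l) * (v 1 * (starRingEnd ℂ) (v 1))
      = (1 + omg ^ 2 * z) * (1 + omg * zc) * (v 0 * (starRingEnd ℂ) (v 0)) := by
    linear_combination (norm := ring)
      (-(l * (starRingEnd ℂ) l * (v 1 * (starRingEnd ℂ) (v 1)))) * hss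
      - ((starRingEnd ℂ) (v 0) + omg * (starRingEnd ℂ) (v 2)) * h1
      - (s * l * v 1) * h1c
      + omg ^ 2 * ((starRingEnd ℂ) (v 0) + omg * (starRingEnd ℂ) (v 2)) * hz2
      + omg * (v 0 + omg ^ 2 * z * v 0) * hc2
  -- 3 * l * conj l = (z+1) * (zc+1)
  have hK3 : 3 * (l * (starRingEnd ℂ) l) = (z + 1) * (zc + 1) := by
    rw [hzdef, hzcdef]
    linear_combination (-(l * (starRingEnd ℂ) l)) * hss
  -- cast facts
  have hcastl : ((‖l‖ ^ 2 : ℝ) : ℂ) = l * (starRingEnd ℂ) l := by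
    rw [Complex.sq_norm, Complex.mul_conj]
  have hcastv : ∀ e : Fin 3,
      ((‖v e‖ ^ 2 : ℝ) : ℂ) = v e * (starRingEnd ℂ) (v e) := by
    intro e; rw [Complex.sq_norm, Complex.mul_conj]
  rw [Fin.sum_univ_three, hcastl, hcastv 0, hcastv 1, hcastv 2]
  have hsum' := omg_sum
  rw [show (((0 : Fin 3) : ℕ)) = 0 from rfl, show (((1 : Fin 3) : ℕ)) = 1 from rfl,
    show (((2 : Fin 3) : ℕ)) = 2 from rfl, pow_zero, pow_one]
  -- final identity
  have T : ℂ := v 0 * (starRingEnd ℂ) (v 0)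
  linear_combination (norm := ring)
    ((v 0 * (starRingEnd ℂ) (v 0)) * (1 + omg ^ 2 * z * zc) / 3) * hK3
    + (omg / 3) * hP1
    + (omg ^ 2 * (l * (starRingEnd ℂ) l) * (starRingEnd ℂ) (v 2)) * hz2
    + (omg ^ 2 * (l * (starRingEnd ℂ) l) * z * v 0) * hc2
    + ((v 0 * (starRingEnd ℂ) (v 0)) / 3) *
        ((-(zc * (1 + omg) * (1 + zc))) * hquad
          + (z - omg - 1) * hquadc
          + (zc + z * omg + z * zc * omg ^ 2 + z ^ 2 * zc + z ^ 2 * zc ^ 2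
              - z - z * zc * omg - zc * omg + z * zc) * hsum')
lemma partA (lp lm : ℂ) (hlp : lp ≠ 0) (hlm : lm ≠ 0) (vp vm : Fin 3 → ℂ)
    (hvp : F3tilde.mulVec vp = lp • vp) (hvm : F3tilde.mulVec vm = lm • vm)
    (hvpu : ∑ e, ‖vp e‖ ^ 2 = 1) (hvmu : ∑ e, ‖vm e‖ ^ 2 = 1)
    (hne : lp ≠ lm) :
    ¬ ∃ C : ℝ, 0 ≤ C ∧ C ≤ 1 ∧
        ∀ e : Fin 3,
          C * ‖vp e‖ ^ 2 + (1 - C) * ‖vm e‖ ^ 2 = 1 / 3 := by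
  rintro ⟨C, hC0, hC1, hCe⟩
  obtain ⟨hvp0, hquadp, hphip⟩ := eigen_facts lp hlp vp hvp hvpu
  obtain ⟨hvm0, hquadm, hphim⟩ := eigen_facts lm hlm vm hvm hvmu
  set s : ℂ := ((Real.sqrt 3 : ℝ) : ℂ) with hs
  set zp : ℂ := s * lp - 1 with hzpdef
  set zm : ℂ := s * lm - 1 with hzmdef
  have hzne : zp ≠ zm := by
    intro h
    exact hne (mul_left_cancel₀ sqrt3_ne (by linear_combination h))
  have hzsum : zp + zm = omg - 1 := by
    have hfac : (zp - zm) * (zp + zm - (omg - 1)) = 0 := by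
      linear_combination hquadp - hquadm
    rcases mul_eq_zero.mp hfac with h' | h'
    · exact absurd (sub_eq_zero.mp h') hzne
    · exact sub_eq_zero.mp h'
  have hzprod : zp * zm = -1 := by
    linear_combination (-1 : ℂ) * hquadp + zp * hzsum
  have hzp_ne : zp ≠ 0 := by
    intro h; rw [h, zero_mul] at hzprod; norm_num at hzprod
  have hzm_ne : zm ≠ 0 := by
    intro h; rw [h, mul_zero] at hzprod; norm_num at hzprod
  -- the key convex relation
  have hkey : (C : ℂ) * (∑ e : Fin 3, omg ^ (e : ℕ) * ((‖vp e‖ ^ 2 : ℝ) : ℂ))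
      + ((1 - C : ℝ) : ℂ) * (∑ e : Fin 3, omg ^ (e : ℕ) * ((‖vm e‖ ^ 2 : ℝ) : ℂ))
      = 0 := by
    have hc0 : ((C * ‖vp 0‖ ^ 2 + (1 - C) * ‖vm 0‖ ^ 2 : ℝ) : ℂ)
        = ((1/3 : ℝ) : ℂ) := by exact_mod_cast congrArg Complex.ofReal (hCe 0)
    have hc1 : ((C * ‖vp 1‖ ^ 2 + (1 - C) * ‖vm 1‖ ^ 2 : ℝ) : ℂ)
        = ((1/3 : ℝ) : ℂ) := by exact_mod_cast congrArg Complex.ofReal (hCe 1)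
    have hc2 : ((C * ‖vp 2‖ ^ 2 + (1 - C) * ‖vm 2‖ ^ 2 : ℝ) : ℂ)
        = ((1/3 : ℝ) : ℂ) := by exact_mod_cast congrArg Complex.ofReal (hCe 2)
    push_cast at hc0 hc1 hc2 ⊢
    rw [Fin.sum_univ_three, Fin.sum_univ_three]
    rw [show (((0 : Fin 3) : ℕ)) = 0 from rfl, show (((1 : Fin 3) : ℕ)) = 1 from rfl,
      show (((2 : Fin 3) : ℕ)) = 2 from rfl, pow_zero, pow_one]
    linear_combination hc0 + omg * hc1 + omg ^ 2 * hc2 + (1/3 : ℂ) * omg_sum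
  -- scalar equation α zp + β zm = 0
  set α : ℝ := C * ‖vp 0‖ ^ 2 * ‖lm‖ ^ 2 with hαdef
  set β : ℝ := (1 - C) * ‖vm 0‖ ^ 2 * ‖lp‖ ^ 2 with hβdef
  have heq : (α : ℂ) * zp + (β : ℂ) * zm = 0 := by
    push_cast at hphip hphim hkey
    rw [hαdef, hβdef]
    push_cast
    linear_combination ((‖lm‖ : ℝ) : ℂ) ^ 2 * ((‖lp‖ : ℝ) : ℂ) ^ 2 * hkey
      - (C : ℂ) * ((‖lm‖ : ℝ) : ℂ) ^ 2 * hphip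
      - (1 - (C : ℂ)) * ((‖lp‖ : ℝ) : ℂ) ^ 2 * hphim
  have hvp0' : 0 < ‖vp 0‖ ^ 2 := pow_pos (norm_pos_iff.mpr hvp0) 2
  have hvm0' : 0 < ‖vm 0‖ ^ 2 := pow_pos (norm_pos_iff.mpr hvm0) 2
  have hlp' : 0 < ‖lp‖ ^ 2 := pow_pos (norm_pos_iff.mpr hlp) 2
  have hlm' : 0 < ‖lm‖ ^ 2 := pow_pos (norm_pos_iff.mpr hlm) 2
  have hα : 0 ≤ α := mul_nonneg (mul_nonneg hC0 hvp0'.le) hlm'.le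
  have hβ : 0 ≤ β := mul_nonneg (mul_nonneg (by linarith) hvm0'.le) hlp'.le
  -- endgame
  by_cases hα0 : α = 0
  · -- then C = 0, so β > 0 and zm = 0, contradiction
    have hC : C = 0 := by
      by_contra hC
      have hCpos : 0 < C := lt_of_le_of_ne hC0 (Ne.symm hC)
      exact ne_of_gt (mul_pos (mul_pos hCpos hvp0') hlm') hα0
    have hβpos : 0 < β := by
      rw [hβdef, hC, sub_zero, one_mul]
      exact mul_pos hvm0' hlp'
    rw [hα0] at heq
    simp only [Complex.ofReal_zero, zero_mul, zero_add] at heq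
    rcases mul_eq_zero.mp heq with h | h
    · rw [Complex.ofReal_eq_zero] at h; exact absurd h hβpos.ne'
    · exact hzm_ne h
  · have hαpos : 0 < α := lt_of_le_of_ne hα (Ne.symm hα0)
    by_cases hβ0 : β = 0
    · rw [hβ0] at heq
      simp only [Complex.ofReal_zero, zero_mul, add_zero] at heq
      rcases mul_eq_zero.mp heq with h | h
      · rw [Complex.ofReal_eq_zero] at h; exact absurd h hα0
      · exact hzp_ne h
    · have hβpos : 0 < β := lt_of_le_of_ne hβ (Ne.symm hβ0)
      have h1 : (α : ℂ) * (zp * zp) = (β : ℝ) := by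
        linear_combination zp * heq - (β : ℂ) * hzprod
      have him0 : α * (zp.re * zp.im + zp.im * zp.re) = 0 := by
        have h2 := congrArg Complex.im h1
        simp only [Complex.mul_im, Complex.mul_re, Complex.ofReal_im, Complex.ofReal_re,
          zero_mul, mul_zero, add_zero, zero_add] at h2
        linarith [h2]
      have hre0 : α * (zp.re * zp.re - zp.im * zp.im) = β := by
        have h2 := congrArg Complex.re h1
        simp only [Complex.mul_im, Complex.mul_re, Complex.ofReal_im, Complex.ofReal_re,
          zero_mul, mul_zero, sub_zero, add_zero, zero_add] at h2
        linarith [h2]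
      have hprodim : zp.re * zp.im = 0 := by nlinarith
      have hrepos : zp.re ≠ 0 := by
        intro h
        rw [h] at hre0
        nlinarith
      have hzpim : zp.im = 0 := by
        rcases mul_eq_zero.mp hprodim with h | h
        · exact absurd h hrepos
        · exact h
      have hzmim : zm.im = 0 := by
        have := congrArg Complex.im hzprod
        rw [Complex.mul_im, hzpim] at this
        simp at this
        rcases this with h | h
        · exact absurd h hrepos
        · exact h
      have := congrArg Complex.im hzsum
      rw [Complex.add_im, hzpim, hzmim, Complex.sub_im, Complex.one_im] at this
      simp at this
      exact absurd this.symm (ne_of_gt omg_im_pos)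
lemma measSe (e : Fin 3) : MeasurableSet {ε : ℤ → Fin 3 | ε 0 = e} := by
  have : {ε : ℤ → Fin 3 | ε 0 = e} = (fun ε : ℤ → Fin 3 => ε 0) ⁻¹' {e} := by
    ext ε; simp
  rw [this]
  exact measurable_pi_apply 0 (measurableSet_singleton e)

lemma prodMeasure_S {μ : Measure (ℤ → Fin 3)} {P : ℤ → Fin 3 → ℝ}
    (h : IsProductMeasure μ P) (e : Fin 3) :
    μ {ε | ε 0 = e} = ENNReal.ofReal (P 0 e) := by
  have h1 := h {0} (fun _ => e)
  rw [Finset.prod_singleton] at h1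
  have hset : {ε : ℤ → Fin 3 | ∀ i ∈ ({0} : Finset ℤ), ε i = (fun _ => e) i}
      = {ε : ℤ → Fin 3 | ε 0 = e} := by
    ext ε; simp
  rwa [hset] at h1

lemma integral_ind (μ : Measure (ℤ → Fin 3)) (e : Fin 3) :
    ∫ ε, (if ε 0 = e then (1 : ℂ) else 0) ∂μ = ((μ {ε | ε 0 = e}).toReal : ℝ) := by
  have hf : (fun ε : ℤ → Fin 3 => if ε 0 = e then (1 : ℂ) else 0)
      = Set.indicator {ε : ℤ → Fin 3 | ε 0 = e} (fun _ => (1 : ℂ)) := by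
    funext ε
    by_cases h : ε 0 = e
    · rw [if_pos h, Set.indicator_of_mem (by exact h)]
    · rw [if_neg h, Set.indicator_of_notMem (by exact h)]
  rw [hf, MeasureTheory.integral_indicator_const _ (measSe e)]
  rw [Complex.real_smul, mul_one]
  rfl

noncomputable def fInd (e : Fin 3) : C(ℤ → Fin 3, ℂ) :=
  ⟨fun ε => if ε 0 = e then 1 else 0, by
    exact (continuous_of_discreteTopology
      (f := fun x : Fin 3 => if x = e then (1:ℂ) else 0)).comp (continuous_apply 0)⟩
lemma fixed_n (lp lm : ℂ) (vp vm : Fin 3 → ℂ) (n : ℕ) (hn : 0 < n) (η : ZMod n → Bool)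
    (μt : ZMod n → Measure (ℤ → Fin 3)) (hT : IsTildeFamily vp vm n hn η μt) :
    ∃ w : ℝ, 0 ≤ w ∧ w ≤ 1 ∧ ∀ e : Fin 3,
      ((muEta lp lm n hn η μt) {ε | ε 0 = e}).toReal
        = w * Pweight vp e + (1 - w) * Pweight vm e := by
  haveI : NeZero n := ⟨hn.ne'⟩
  set Cw : ZMod n → ℝ := Cweight lp lm n hn η with hCw
  have hCw_nonneg : ∀ j, 0 ≤ Cw j := by
    intro j
    apply Finset.prod_nonneg
    intro m _
    apply div_nonneg (by positivity)
    unfold LamEta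
    positivity
  set N : ℝ := ∑ j : ZMod n, Cw j with hN
  have hCw0 : Cw 0 = 1 := by
    rw [hCw]
    unfold Cweight
    rw [ZMod.val_zero, Finset.range_zero, Finset.prod_empty]
  have hN1 : 1 ≤ N := by
    rw [hN, ← hCw0]
    exact Finset.single_le_sum (fun j _ => hCw_nonneg j) (Finset.mem_univ 0)
  have hNpos : 0 < N := lt_of_lt_of_le one_pos hN1
  set Q : ZMod n → Fin 3 → ℝ := fun j e => Pweight (if η j then vp else vm) e with hQ
  have hQ_nonneg : ∀ j e, 0 ≤ Q j e := by
    intro j e; rw [hQ]; unfold Pweight; positivity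
  have hμtS : ∀ (j : ZMod n) (e : Fin 3), μt j {ε | ε 0 = e} = ENNReal.ofReal (Q j e) := by
    intro j e
    have h := prodMeasure_S ((hT j).2) e
    rw [h]
    norm_num
    rfl
  -- measure of the cylinder under muEta
  have hmu : ∀ e : Fin 3, ((muEta lp lm n hn η μt) {ε | ε 0 = e}).toReal
      = N⁻¹ * ∑ j : ZMod n, Cw j * Q j e := by
    intro e
    have h1 : (muEta lp lm n hn η μt) {ε | ε 0 = e}
        = (ENNReal.ofReal N)⁻¹ * ∑ j : ZMod n, ENNReal.ofReal (Cw j) * (μt j {ε | ε 0 = e}) := by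
      rw [muEta, Measure.smul_apply, smul_eq_mul]
      congr 1
      rw [Measure.finset_sum_apply]
      exact Finset.sum_congr rfl fun j _ => by rw [Measure.smul_apply, smul_eq_mul]
    rw [h1]
    have h2 : ∑ j : ZMod n, ENNReal.ofReal (Cw j) * (μt j {ε | ε 0 = e})
        = ENNReal.ofReal (∑ j : ZMod n, Cw j * Q j e) := by
      rw [ENNReal.ofReal_sum_of_nonneg (fun j _ => mul_nonneg (hCw_nonneg j) (hQ_nonneg j e))]
      exact Finset.sum_congr rfl fun j _ => by
        rw [hμtS j e, ENNReal.ofReal_mul (hCw_nonneg j)]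
    rw [h2, ENNReal.toReal_mul, ENNReal.toReal_inv, ENNReal.toReal_ofReal hNpos.le,
      ENNReal.toReal_ofReal (Finset.sum_nonneg fun j _ =>
        mul_nonneg (hCw_nonneg j) (hQ_nonneg j e))]
  -- split the sum
  set A : ℝ := ∑ j ∈ Finset.univ.filter (fun j : ZMod n => η j = true), Cw j with hA
  have hA_nonneg : 0 ≤ A :=
    Finset.sum_nonneg fun j _ => hCw_nonneg j
  have hAN : A ≤ N := by
    rw [hA, hN]
    exact Finset.sum_le_sum_of_subset_of_nonneg (Finset.filter_subset _ _)
      (fun j _ _ => hCw_nonneg j)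
  refine ⟨N⁻¹ * A, by positivity, ?_, ?_⟩
  · rw [← inv_mul_cancel₀ hNpos.ne']
    exact mul_le_mul_of_nonneg_left hAN (by positivity)
  · intro e
    rw [hmu e]
    have hsplit : ∑ j : ZMod n, Cw j * Q j e
        = A * Pweight vp e + (N - A) * Pweight vm e := by
      rw [← Finset.sum_filter_add_sum_filter_not Finset.univ (fun j : ZMod n => η j = true)
        (fun j => Cw j * Q j e)]
      congr 1
      · rw [hA, Finset.sum_mul]
        exact Finset.sum_congr rfl fun j hj => by
          simp only [Finset.mem_filter] at hj
          simp [hQ, hj.2]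
      · have hNA : N - A = ∑ j ∈ Finset.univ.filter (fun j : ZMod n => ¬η j = true), Cw j := by
          rw [hN, hA, ← Finset.sum_filter_add_sum_filter_not Finset.univ
            (fun j : ZMod n => η j = true) Cw]
          ring
        rw [hNA, Finset.sum_mul]
        exact Finset.sum_congr rfl fun j hj => by
          simp only [Finset.mem_filter] at hj
          simp [hQ, hj.2]
    rw [hsplit]
    field_simp

/-- If `λ₊ ≠ λ₋` are the only nonzero eigenvalues of `F̃₃*`, then
(a) no `C ∈ [0,1]` satisfies `C|v₊(e)|² + (1-C)|v₋(e)|² = 1/3` for all `e`, and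
(b) the natural measure (the uniform Bernoulli product measure) is not a weak-* limit of
any sequence of measures from the family `{μ_η}`. -/
theorem natural_measure_not_in_family
    (lp lm : ℂ) (hlp : lp ≠ 0) (hlm : lm ≠ 0) (vp vm : Fin 3 → ℂ)
    (hvp : F3tilde.mulVec vp = lp • vp) (hvm : F3tilde.mulVec vm = lm • vm)
    (hvpu : ∑ e, ‖vp e‖ ^ 2 = 1) (hvmu : ∑ e, ‖vm e‖ ^ 2 = 1)
    (hne : lp ≠ lm)
    (honly : ∀ z : ℂ, z ≠ 0 → (∃ w : Fin 3 → ℂ, w ≠ 0 ∧ F3tilde.mulVec w = z • w) →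
      z = lp ∨ z = lm) :
    (¬ ∃ C : ℝ, 0 ≤ C ∧ C ≤ 1 ∧
        ∀ e : Fin 3,
          C * ‖vp e‖ ^ 2 + (1 - C) * ‖vm e‖ ^ 2 = 1 / 3) ∧
    ∀ (μnat : Measure (ℤ → Fin 3)), IsProbabilityMeasure μnat →
      IsProductMeasure μnat (fun _ _ => 1 / 3) →
      ∀ (nn : ℕ → ℕ) (hnn : ∀ p, 0 < nn p) (η : ∀ p, ZMod (nn p) → Bool)
        (μt : ∀ p, ZMod (nn p) → Measure (ℤ → Fin 3)),
        (∀ p, IsTildeFamily vp vm (nn p) (hnn p) (η p) (μt p)) →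
        ¬ ∀ f : C(ℤ → Fin 3, ℂ),
            Filter.Tendsto (fun p => ∫ ε, f ε ∂(muEta lp lm (nn p) (hnn p) (η p) (μt p)))
              Filter.atTop (nhds (∫ ε, f ε ∂μnat)) := by
  have habs := partA lp lm hlp hlm vp vm hvp hvm hvpu hvmu hne
  refine ⟨habs, ?_⟩
  intro μnat _ hμnatProd nn hnn η μt htilde hconv
  have hchoice := fun p => fixed_n lp lm vp vm (nn p) (hnn p) (η p) (μt p) (htilde p)
  choose w hw0 hw1 hwx using hchoice
  -- the integral against μnat
  have hnat : ∀ e : Fin 3, ∫ ε, fInd e ε ∂μnat = ((1/3 : ℝ) : ℂ) := by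
    intro e
    have : ∀ ε : ℤ → Fin 3, fInd e ε = if ε 0 = e then (1:ℂ) else 0 := fun _ => rfl
    simp only [this]
    rw [integral_ind μnat e, prodMeasure_S hμnatProd e, ENNReal.toReal_ofReal (by norm_num)]
  -- the integral against μ_η
  have hmu : ∀ (e : Fin 3) (p : ℕ),
      ∫ ε, fInd e ε ∂(muEta lp lm (nn p) (hnn p) (η p) (μt p))
        = (((w p * Pweight vp e + (1 - w p) * Pweight vm e : ℝ)) : ℂ) := by
    intro e p
    have : ∀ ε : ℤ → Fin 3, fInd e ε = if ε 0 = e then (1:ℂ) else 0 := fun _ => rfl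
    simp only [this]
    rw [integral_ind _ e, hwx p e]
  -- real convergence of the one-site marginals
  have hx : ∀ e : Fin 3,
      Filter.Tendsto (fun p => w p * Pweight vp e + (1 - w p) * Pweight vm e)
        Filter.atTop (nhds (1/3)) := by
    intro e
    have h := hconv (fInd e)
    rw [hnat e] at h
    rw [show (fun p => ∫ ε, fInd e ε ∂(muEta lp lm (nn p) (hnn p) (η p) (μt p)))
        = fun p => (((w p * Pweight vp e + (1 - w p) * Pweight vm e : ℝ)) : ℂ) from
      funext fun p => hmu e p] at h
    have h2 := (Complex.continuous_re.tendsto _).comp h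
    simpa only [Function.comp_def, Complex.ofReal_re] using h2
  by_cases hPP : ∀ e, Pweight vp e = Pweight vm e
  · refine habs ⟨0, le_refl 0, zero_le_one, fun e => ?_⟩
    have hconst : (fun p => w p * Pweight vp e + (1 - w p) * Pweight vm e)
        = fun _ => Pweight vm e := by
      funext p; rw [hPP e]; ring
    have h := hx e
    rw [hconst] at h
    have hme : Pweight vm e = 1/3 := tendsto_nhds_unique tendsto_const_nhds h
    unfold Pweight at hme
    rw [hme]; ring
  · push_neg at hPP
    obtain ⟨e0, he0⟩ := hPP
    have hD0 : Pweight vp e0 - Pweight vm e0 ≠ 0 := sub_ne_zero.mpr he0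
    set Cl : ℝ := (1/3 - Pweight vm e0) / (Pweight vp e0 - Pweight vm e0) with hCl
    have hxw : Filter.Tendsto w Filter.atTop (nhds Cl) := by
      have hrw : w = fun p =>
          ((w p * Pweight vp e0 + (1 - w p) * Pweight vm e0) - Pweight vm e0)
            / (Pweight vp e0 - Pweight vm e0) := by
        funext p
        field_simp
        ring
      rw [hrw, hCl]
      exact (((hx e0).sub_const _).div_const _)
    have hCl0 : 0 ≤ Cl := ge_of_tendsto hxw (Filter.Eventually.of_forall hw0)
    have hCl1 : Cl ≤ 1 := le_of_tendsto hxw (Filter.Eventually.of_forall hw1)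
    refine habs ⟨Cl, hCl0, hCl1, fun e => ?_⟩
    have h1 : Filter.Tendsto
        (fun p => w p * (Pweight vp e - Pweight vm e) + Pweight vm e)
        Filter.atTop (nhds (Cl * (Pweight vp e - Pweight vm e) + Pweight vm e)) :=
      (hxw.mul_const _).add_const _
    have h2 := hx e
    rw [show (fun p => w p * Pweight vp e + (1 - w p) * Pweight vm e)
        = fun p => w p * (Pweight vp e - Pweight vm e) + Pweight vm e from
      funext fun p => by ring] at h2
    have hkey := tendsto_nhds_unique h1 h2
    unfold Pweight at hkey
    linear_combination hkey
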